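/- The subgroup H = {(-x, x) : x ∈ ℚ} is a closed and discrete subgroup of the square of the Sorgenfrey line 𝕃². -/

import Mathlib

open Set Filter TopologicalSpace
open scoped Topology Filter

/-- The Sorgenfrey topology on the real line, generated by half-open intervals `[a, b)`. -/
def sorgenfrey : TopologicalSpace ℝ :=
  TopologicalSpace.generateFrom {s : Set ℝ | ∃ a b : ℝ, a < b ∧ s = Set.Ico a b}

noncomputable section SLsec

/-- Type synonym for the Sorgenfrey line. -/
def SL : Type := ℝ

instance : ConditionallyCompleteLinearOrder SL :=
  inferInstanceAs (ConditionallyCompleteLinearOrder ℝ)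

instance : Field SL := inferInstanceAs (Field ℝ)

instance : IsStrictOrderedRing SL := inferInstanceAs (IsStrictOrderedRing ℝ)

instance : Archimedean SL := inferInstanceAs (Archimedean ℝ)

/-- Ring homomorphism between the Sorgenfrey line and the standard real line. -/
def SL.toReal : SL ≃+* ℝ := RingEquiv.refl ℝ

open SL (toReal)

instance : TopologicalSpace SL :=
  TopologicalSpace.generateFrom {s : Set SL | ∃ a b : SL, Ico a b = s}

lemma sorgenfrey_eq : sorgenfrey = (inferInstance : TopologicalSpace SL) := by
  apply le_antisymm
  · apply le_generateFrom
    rintro s ⟨a, b, rfl⟩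
    rcases lt_or_ge a b with h | h
    · exact TopologicalSpace.GenerateOpen.basic _ ⟨a, b, h, rfl⟩
    · rw [Ico_eq_empty h.not_gt, ← Set.sUnion_empty]
      exact TopologicalSpace.GenerateOpen.sUnion ∅ (by simp)
  · apply le_generateFrom
    rintro s ⟨a, b, _, rfl⟩
    exact TopologicalSpace.GenerateOpen.basic _ ⟨a, b, rfl⟩

namespace SL

theorem isOpen_Ico (a b : SL) : IsOpen (Ico a b) :=
  TopologicalSpace.GenerateOpen.basic _ ⟨a, b, rfl⟩

theorem isOpen_Ici (a : SL) : IsOpen (Ici a) :=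
  iUnion_Ico_right a ▸ isOpen_iUnion (isOpen_Ico a)

theorem nhds_basis_Ico (a : SL) : (𝓝 a).HasBasis (a < ·) (Ico a ·) := by
  rw [TopologicalSpace.nhds_generateFrom]
  haveI : Nonempty { x // x ≤ a } := Set.nonempty_Iic_subtype
  have : (⨅ x : { i // i ≤ a }, 𝓟 (Ici ↑x)) = 𝓟 (Ici a) := by
    refine (IsLeast.isGLB ?_).iInf_eq
    exact ⟨⟨⟨a, le_rfl⟩, rfl⟩, forall_mem_range.2 fun b => principal_mono.2 <| Ici_subset_Ici.2 b.2⟩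
  simp only [mem_setOf_eq, iInf_and, iInf_exists, @iInf_comm _ (_ ∈ _), @iInf_comm _ (Set SL),
    iInf_iInf_eq_right, mem_Ico]
  simp_rw [@iInf_comm _ SL (_ ≤ _), iInf_subtype', ← Ici_inter_Iio, ← inf_principal,
    ← inf_iInf, ← iInf_inf, this, iInf_subtype]
  suffices (⨅ x ∈ Ioi a, 𝓟 (Iio x)).HasBasis (a < ·) Iio from this.principal_inf _
  refine hasBasis_biInf_principal ?_ nonempty_Ioi
  exact directedOn_iff_directed.2 <| Monotone.directed_ge fun x y hxy ↦ Iio_subset_Iio hxy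

@[simp]
theorem map_toReal_nhds (a : SL) : map toReal (𝓝 a) = 𝓝[≥] toReal a := by
  refine ((nhds_basis_Ico a).map _).eq_of_same_basis ?_
  simp only [toReal.image_eq_preimage_symm]
  exact nhdsGE_basis_Ico (toReal a)

theorem nhds_eq_map (a : SL) : 𝓝 a = map toReal.symm (𝓝[≥] (toReal a)) := by
  simp_rw [← map_toReal_nhds, map_map, Function.comp_def, toReal.symm_apply_apply, map_id']

theorem nhds_eq_comap (a : SL) : 𝓝 a = comap toReal (𝓝[≥] (toReal a)) := by
  rw [← map_toReal_nhds, comap_map toReal.injective]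

theorem continuous_toReal : Continuous toReal :=
  continuous_iff_continuousAt.2 fun x => by
    rw [ContinuousAt, Tendsto, map_toReal_nhds]
    exact inf_le_left

instance : OrderClosedTopology SL :=
  ⟨isClosed_le_prod.preimage (continuous_toReal.prodMap continuous_toReal)⟩

instance : ContinuousAdd SL := by
  refine ⟨continuous_iff_continuousAt.2 ?_⟩
  rintro ⟨x, y⟩
  rw [ContinuousAt, nhds_prod_eq, nhds_eq_comap (x + y), tendsto_comap_iff,
    nhds_eq_map, nhds_eq_map, prod_map_map_eq, ← nhdsWithin_prod_eq, Ici_prod_Ici]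
  exact (_root_.continuous_add.tendsto _).inf
    (MapsTo.tendsto fun x hx => add_le_add hx.1 hx.2)

theorem isClopen_Ici (a : SL) : IsClopen (Ici a) :=
  ⟨isClosed_Ici, isOpen_Ici a⟩

theorem isClosed_antidiagonal (c : SL) : IsClosed {x : SL × SL | x.1 + x.2 = c} :=
  isClosed_singleton.preimage continuous_add

theorem isClopen_Ici_prod (x : SL × SL) : IsClopen (Ici x) :=
  (Ici_prod_eq x).symm ▸ (isClopen_Ici _).prod (isClopen_Ici _)

theorem isClosed_of_subset_antidiagonal {s : Set (SL × SL)} {c : SL}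
    (hs : ∀ x ∈ s, x.1 + x.2 = c) : IsClosed s := by
  rw [← closure_subset_iff_isClosed]
  rintro ⟨x, y⟩ H
  obtain rfl : x + y = c := by
    change (x, y) ∈ {p : SL × SL | p.1 + p.2 = c}
    exact closure_minimal (hs : s ⊆ {x | x.1 + x.2 = c}) (isClosed_antidiagonal c) H
  rcases mem_closure_iff.1 H (Ici (x, y)) (isClopen_Ici_prod _).2 self_mem_Ici with
    ⟨⟨x', y'⟩, ⟨hx : x ≤ x', hy : y ≤ y'⟩, H⟩
  convert H
  · refine hx.antisymm ?_
    rwa [← add_le_add_iff_right, hs _ H, add_le_add_iff_left]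
  · refine hy.antisymm ?_
    rwa [← add_le_add_iff_left, hs _ H, add_le_add_iff_right]

end SL

lemma aux_closed : IsClosed {p : SL × SL | ∃ q : ℚ, p = (-(q : SL), (q : SL))} := by
  apply SL.isClosed_of_subset_antidiagonal (c := 0)
  rintro p ⟨q, rfl⟩
  simp

open Subtype in
lemma aux_discrete : DiscreteTopology {p : SL × SL | ∃ q : ℚ, p = (-(q : SL), (q : SL))} := by
  refine discreteTopology_iff_forall_isOpen.2 fun U ↦ isClosed_compl_iff.1 <| isClosed_induced_iff.2
    ⟨val '' Uᶜ, SL.isClosed_of_subset_antidiagonal (c := 0) ?_, preimage_image_eq _ val_injective⟩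
  rintro p hp
  obtain ⟨⟨p, ⟨q, rfl⟩⟩, -, rfl⟩ := hp
  simp

end SLsec

/-- The subgroup `H = {(-x, x) : x ∈ ℚ}` is a closed and discrete subgroup of the square
of the Sorgenfrey line `𝕃²` (with the product topology). -/
theorem stmt_1 :
    letI : TopologicalSpace ℝ := sorgenfrey
    IsClosed {p : ℝ × ℝ | ∃ q : ℚ, p = (-(q : ℝ), (q : ℝ))} ∧
      DiscreteTopology {p : ℝ × ℝ | ∃ q : ℚ, p = (-(q : ℝ), (q : ℝ))} := by
  rw [sorgenfrey_eq]
  exact ⟨aux_closed, aux_discrete⟩
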